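/- Let T : Fin 2 → Fin 2 → Fin 2 → ℂ be antisymmetric in its first two arguments, i.e. T i j l = −(T j i l) for all i, j, l, let A : Fin 2 → Fin 2 → ℂ, and let β : Fin 2 → ℂ. Then −∑_{i,l} |A i l|² + 2·Re(∑_{i,j,l} conj(T i j l) · (A i l) · (β j)) − (1/2)·(∑_{i,j,l} |T i j l|²)·(∑_j |β j|²) ≤ 0. (This is the pointwise algebraic inequality, special to complex dimension two, showing that for a (0,1)-form β one has −|∇β|² + 2 Re⟨β, T ∘ ∂β⟩ − ⟨Q, β ⊗ β̄⟩ ≤ 0 in a unitary frame, where Q = ½|T|² g.) -/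

import Mathlib

open scoped BigOperators

/-- The pointwise algebraic inequality, special to complex dimension two: for a torsion
array `T` antisymmetric in its first two indices, an array `A` (playing the role of `∇β`)
and a vector `β`, one has `−|A|² + 2 Re⟨conj T · A · β⟩ − ½|T|²|β|² ≤ 0`. -/
theorem dimension_two_torsion_inequality
    (T : Fin 2 → Fin 2 → Fin 2 → ℂ)
    (hT : ∀ i j l, T i j l = -(T j i l))
    (A : Fin 2 → Fin 2 → ℂ) (β : Fin 2 → ℂ) :
    -(∑ i, ∑ l, ‖A i l‖ ^ 2)
      + 2 * (∑ i, ∑ j, ∑ l, (starRingEnd ℂ) (T i j l) * A i l * β j).re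
      - (1 / 2) * (∑ i, ∑ j, ∑ l, ‖T i j l‖ ^ 2) * (∑ j, ‖β j‖ ^ 2)
      ≤ 0 := by
  have h0 : ∀ l, T 0 0 l = 0 := fun l => by linear_combination (1/2 : ℂ) * hT 0 0 l
  have h1 : ∀ l, T 1 1 l = 0 := fun l => by linear_combination (1/2 : ℂ) * hT 1 1 l
  have h2 : ∀ l, T 1 0 l = -(T 0 1 l) := fun l => hT 1 0 l
  have key : -(∑ i, ∑ l, ‖A i l‖ ^ 2)
      + 2 * (∑ i, ∑ j, ∑ l, (starRingEnd ℂ) (T i j l) * A i l * β j).re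
      - (1 / 2) * (∑ i, ∑ j, ∑ l, ‖T i j l‖ ^ 2) * (∑ j, ‖β j‖ ^ 2)
      = -(‖A 0 0 - T 0 1 0 * (starRingEnd ℂ) (β 1)‖ ^ 2
        + ‖A 0 1 - T 0 1 1 * (starRingEnd ℂ) (β 1)‖ ^ 2
        + ‖A 1 0 + T 0 1 0 * (starRingEnd ℂ) (β 0)‖ ^ 2
        + ‖A 1 1 + T 0 1 1 * (starRingEnd ℂ) (β 0)‖ ^ 2) := by
    simp only [Fin.sum_univ_two, h0, h1, h2, Complex.sq_norm, Complex.normSq_apply,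
      Complex.mul_re, Complex.mul_im, Complex.add_re, Complex.add_im, Complex.sub_re,
      Complex.sub_im, Complex.neg_re, Complex.neg_im, Complex.conj_re, Complex.conj_im,
      map_zero, Complex.zero_re, Complex.zero_im, map_neg]
    ring
  rw [key]
  have : (0:ℝ) ≤ ‖A 0 0 - T 0 1 0 * (starRingEnd ℂ) (β 1)‖ ^ 2
        + ‖A 0 1 - T 0 1 1 * (starRingEnd ℂ) (β 1)‖ ^ 2
        + ‖A 1 0 + T 0 1 0 * (starRingEnd ℂ) (β 0)‖ ^ 2
        + ‖A 1 1 + T 0 1 1 * (starRingEnd ℂ) (β 0)‖ ^ 2 := by positivity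
  linarith
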